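/- Let k be a field of characteristic 0 and let φ : k[a, b, c, d, e, f] → k[x₀, x₁, x₂] be the k-algebra homomorphism determined by a ↦ x₁³, b ↦ x₂³ − x₀²x₂, c ↦ x₀x₁², d ↦ x₁²x₂, e ↦ x₁x₂², f ↦ x₀x₁x₂. Then the kernel of φ is exactly the ideal generated by the five quadrics c·e − d·f, d² − a·e, c·d − a·f, b·d − e² + f², and a·b − d·e + c·f. -/

import Mathlib

open MvPolynomial

/-- The map `φ : k[a,b,c,d,e,f] → k[x₀,x₁,x₂]` sending the six variables to the six cubics
`x₁³, x₂³ − x₀²x₂, x₀x₁², x₁²x₂, x₁x₂², x₀x₁x₂`. -/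
noncomputable abbrev Stmt5.phi (k : Type*) [Field k] :
    MvPolynomial (Fin 6) k →ₐ[k] MvPolynomial (Fin 3) k :=
  aeval ![X 1 ^ 3, X 2 ^ 3 - X 0 ^ 2 * X 2, X 0 * X 1 ^ 2, X 1 ^ 2 * X 2,
    X 1 * X 2 ^ 2, X 0 * X 1 * X 2]

noncomputable abbrev Stmt5Proof.phi' (k : Type*) [Field k] :
    MvPolynomial (Fin 6) k →ₐ[k] MvPolynomial (Fin 3) k := Stmt5.phi k

namespace Stmt5Proof
open Finsupp

variable {k : Type*} [Field k]

def E0 (u : Fin 6 →₀ ℕ) : ℕ := 2 * u 1 + u 2 + u 5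
def E1 (u : Fin 6 →₀ ℕ) : ℕ := 3 * u 0 + 2 * u 2 + 2 * u 3 + u 4 + u 5
def E2 (u : Fin 6 →₀ ℕ) : ℕ := u 1 + u 3 + 2 * u 4 + u 5
def su (u : Fin 6 →₀ ℕ) : ℕ := u 0 + u 1 + u 2 + u 3 + u 4 + u 5

lemma su_add (u v : Fin 6 →₀ ℕ) : su (u + v) = su u + su v := by
  simp only [su, Finsupp.add_apply]; ring
lemma su_single (i : Fin 6) : su (single i 1) = 1 := by
  fin_cases i <;> simp [su, Finsupp.single_apply]

lemma mono_decomp (u : Fin 6 →₀ ℕ) (i : Fin 6) (h : u i ≠ 0) (c : k) :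
    monomial u c = monomial (u - single i 1) c * X i ∧ (u - single i 1) + single i 1 = u := by
  have h2 : (u - single i 1) + single i 1 = u := by
    ext j
    simp only [Finsupp.add_apply, Finsupp.tsub_apply, Finsupp.single_apply]
    rcases eq_or_ne i j with rfl | hj
    · simp only [if_pos rfl, if_true]
      have := h
      omega
    · simp [hj]
  exact ⟨by rw [X, monomial_mul, mul_one, h2], h2⟩

lemma phi_X0 : phi' k (X 0) = monomial (single 1 3) 1 := by
  simp [X_pow_eq_monomial]
lemma phi_X1 : phi' k (X 1) = monomial (single 2 3) 1 - monomial (single 0 2 + single 2 1) 1 := by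
  simp only [phi', Stmt5.phi, aeval_X]
  rw [show ((![X 1 ^ 3, X 2 ^ 3 - X 0 ^ 2 * X 2, X 0 * X 1 ^ 2, X 1 ^ 2 * X 2,
    X 1 * X 2 ^ 2, X 0 * X 1 * X 2] : Fin 6 → MvPolynomial (Fin 3) k) 1) = X 2 ^ 3 - X 0 ^ 2 * X 2 from rfl]
  rw [X_pow_eq_monomial, X_pow_eq_monomial, X, monomial_mul, mul_one]
lemma phi_X2 : phi' k (X 2) = monomial (single 0 1 + single 1 2) 1 := by
  simp only [phi', Stmt5.phi, aeval_X]
  rw [show ((![X 1 ^ 3, X 2 ^ 3 - X 0 ^ 2 * X 2, X 0 * X 1 ^ 2, X 1 ^ 2 * X 2,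
    X 1 * X 2 ^ 2, X 0 * X 1 * X 2] : Fin 6 → MvPolynomial (Fin 3) k) 2) = X 0 * X 1 ^ 2 from rfl]
  rw [X_pow_eq_monomial, X, monomial_mul, mul_one]
lemma phi_X3 : phi' k (X 3) = monomial (single 1 2 + single 2 1) 1 := by
  simp only [phi', Stmt5.phi, aeval_X]
  rw [show ((![X 1 ^ 3, X 2 ^ 3 - X 0 ^ 2 * X 2, X 0 * X 1 ^ 2, X 1 ^ 2 * X 2,
    X 1 * X 2 ^ 2, X 0 * X 1 * X 2] : Fin 6 → MvPolynomial (Fin 3) k) 3) = X 1 ^ 2 * X 2 from rfl]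
  rw [X_pow_eq_monomial, X, monomial_mul, mul_one]
lemma phi_X4 : phi' k (X 4) = monomial (single 1 1 + single 2 2) 1 := by
  simp only [phi', Stmt5.phi, aeval_X]
  rw [show ((![X 1 ^ 3, X 2 ^ 3 - X 0 ^ 2 * X 2, X 0 * X 1 ^ 2, X 1 ^ 2 * X 2,
    X 1 * X 2 ^ 2, X 0 * X 1 * X 2] : Fin 6 → MvPolynomial (Fin 3) k) 4) = X 1 * X 2 ^ 2 from rfl]
  rw [X_pow_eq_monomial, X, monomial_mul, mul_one]
lemma phi_X5 : phi' k (X 5) = monomial (single 0 1 + single 1 1 + single 2 1) 1 := by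
  simp only [phi', Stmt5.phi, aeval_X]
  rw [show ((![X 1 ^ 3, X 2 ^ 3 - X 0 ^ 2 * X 2, X 0 * X 1 ^ 2, X 1 ^ 2 * X 2,
    X 1 * X 2 ^ 2, X 0 * X 1 * X 2] : Fin 6 → MvPolynomial (Fin 3) k) 5) = X 0 * X 1 * X 2 from rfl]
  rw [X, X, X, monomial_mul, monomial_mul, mul_one, mul_one]

lemma coeff_base (c : k) (U : Fin 3 →₀ ℕ)
    (h : coeff U (phi' k (monomial (0 : Fin 6 →₀ ℕ) c)) ≠ 0) :
    U 1 = E1 0 ∧ U 0 + U 2 = E0 0 + E2 0 ∧ U 0 ≤ E0 0 := by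
  rw [monomial_zero', aeval_C] at h
  have hU : U = 0 := by
    by_contra hU
    rw [show (algebraMap k (MvPolynomial (Fin 3) k)) c = C c from rfl, coeff_C] at h
    simp [Ne.symm hU] at h
  subst hU
  simp [E0, E1, E2]

lemma coeff_facts : ∀ (n : ℕ) (u : Fin 6 →₀ ℕ), su u ≤ n → ∀ (c : k) (U : Fin 3 →₀ ℕ),
    coeff U ((phi' k) (monomial u c)) ≠ 0 →
    U 1 = E1 u ∧ U 0 + U 2 = E0 u + E2 u ∧ U 0 ≤ E0 u := by
  intro n
  induction n with
  | zero =>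
    intro u hu c U h
    have h0 : u = 0 := by
      ext j
      have : su u = 0 := Nat.le_zero.mp hu
      simp only [su] at this
      fin_cases j <;> simp <;> omega
    subst h0; exact coeff_base c U h
  | succ n ih =>
    intro u hu c U h
    by_cases h0 : u = 0
    · subst h0; exact coeff_base c U h
    · obtain ⟨i, hi⟩ : ∃ i, u i ≠ 0 := by
        by_contra hall; push_neg at hall
        exact h0 (Finsupp.ext fun j => hall j)
      obtain ⟨hmul, h2⟩ := mono_decomp u i hi c
      rw [hmul, map_mul] at h
      have hsu : su (u - single i 1) + 1 = su u := by
        conv_rhs => rw [← h2]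
        rw [su_add, su_single]
      have hsu' : su (u - single i 1) ≤ n := by omega
      have hcase : i = 0 ∨ i = 1 ∨ i = 2 ∨ i = 3 ∨ i = 4 ∨ i = 5 := by
        fin_cases i <;> decide
      rcases hcase with rfl | rfl | rfl | rfl | rfl | rfl
      · rw [phi_X0, coeff_mul_monomial'] at h
        split_ifs at h with hle
        · rw [mul_one] at h
          obtain ⟨f1, f2, f3⟩ := ih _ hsu' c _ h
          have hle1 := Finsupp.le_def.mp hle 1
          rw [← h2]
          simp only [E0, E1, E2, Finsupp.add_apply, Finsupp.tsub_apply,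
            Finsupp.single_apply] at f1 f2 f3 ⊢
          simp at f1 f2 f3 hle1 ⊢
          omega
        · exact absurd rfl h
      · rw [phi_X1, mul_sub, coeff_sub] at h
        have hc : coeff U (phi' k (monomial (u - single 1 1) c) * monomial (single 2 3) 1) ≠ 0 ∨
            coeff U (phi' k (monomial (u - single 1 1) c) * monomial (single 0 2 + single 2 1) 1) ≠ 0 := by
          by_contra hcc; push_neg at hcc
          rw [hcc.1, hcc.2, sub_zero] at h; exact h rfl
        rw [← h2]
        rcases hc with h' | h' <;> rw [coeff_mul_monomial'] at h' <;> split_ifs at h' with hle <;>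
          [skip; exact absurd rfl h'; skip; exact absurd rfl h'] <;>
          rw [mul_one] at h' <;> obtain ⟨f1, f2, f3⟩ := ih _ hsu' c _ h'
        · have hle2 := Finsupp.le_def.mp hle 2
          simp only [E0, E1, E2, Finsupp.add_apply, Finsupp.tsub_apply,
            Finsupp.single_apply] at f1 f2 f3 ⊢
          simp at f1 f2 f3 hle2 ⊢
          omega
        · have hle0 := Finsupp.le_def.mp hle 0
          have hle2 := Finsupp.le_def.mp hle 2
          simp only [E0, E1, E2, Finsupp.add_apply, Finsupp.tsub_apply,
            Finsupp.single_apply] at f1 f2 f3 ⊢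
          simp at f1 f2 f3 hle0 hle2 ⊢
          omega
      · rw [phi_X2, coeff_mul_monomial'] at h
        split_ifs at h with hle
        · rw [mul_one] at h
          obtain ⟨f1, f2, f3⟩ := ih _ hsu' c _ h
          have hle0 := Finsupp.le_def.mp hle 0
          have hle1 := Finsupp.le_def.mp hle 1
          rw [← h2]
          simp only [E0, E1, E2, Finsupp.add_apply, Finsupp.tsub_apply,
            Finsupp.single_apply] at f1 f2 f3 ⊢
          simp at f1 f2 f3 hle0 hle1 ⊢
          omega
        · exact absurd rfl h
      · rw [phi_X3, coeff_mul_monomial'] at h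
        split_ifs at h with hle
        · rw [mul_one] at h
          obtain ⟨f1, f2, f3⟩ := ih _ hsu' c _ h
          have hle1 := Finsupp.le_def.mp hle 1
          have hle2 := Finsupp.le_def.mp hle 2
          rw [← h2]
          simp only [E0, E1, E2, Finsupp.add_apply, Finsupp.tsub_apply,
            Finsupp.single_apply] at f1 f2 f3 ⊢
          simp at f1 f2 f3 hle1 hle2 ⊢
          omega
        · exact absurd rfl h
      · rw [phi_X4, coeff_mul_monomial'] at h
        split_ifs at h with hle
        · rw [mul_one] at h
          obtain ⟨f1, f2, f3⟩ := ih _ hsu' c _ h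
          have hle1 := Finsupp.le_def.mp hle 1
          have hle2 := Finsupp.le_def.mp hle 2
          rw [← h2]
          simp only [E0, E1, E2, Finsupp.add_apply, Finsupp.tsub_apply,
            Finsupp.single_apply] at f1 f2 f3 ⊢
          simp at f1 f2 f3 hle1 hle2 ⊢
          omega
        · exact absurd rfl h
      · rw [phi_X5, coeff_mul_monomial'] at h
        split_ifs at h with hle
        · rw [mul_one] at h
          obtain ⟨f1, f2, f3⟩ := ih _ hsu' c _ h
          have hle0 := Finsupp.le_def.mp hle 0
          have hle1 := Finsupp.le_def.mp hle 1
          have hle2 := Finsupp.le_def.mp hle 2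
          rw [← h2]
          simp only [E0, E1, E2, Finsupp.add_apply, Finsupp.tsub_apply,
            Finsupp.single_apply] at f1 f2 f3 ⊢
          simp at f1 f2 f3 hle0 hle1 hle2 ⊢
          omega
        · exact absurd rfl h

noncomputable def Eu (u : Fin 6 →₀ ℕ) : Fin 3 →₀ ℕ :=
  single 0 (E0 u) + single 1 (E1 u) + single 2 (E2 u)

lemma E0_add (u v : Fin 6 →₀ ℕ) : E0 (u + v) = E0 u + E0 v := by
  simp only [E0, Finsupp.add_apply]; ring
lemma E1_add (u v : Fin 6 →₀ ℕ) : E1 (u + v) = E1 u + E1 v := by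
  simp only [E1, Finsupp.add_apply]; ring
lemma E2_add (u v : Fin 6 →₀ ℕ) : E2 (u + v) = E2 u + E2 v := by
  simp only [E2, Finsupp.add_apply]; ring

lemma Eu_apply0 (u : Fin 6 →₀ ℕ) : Eu u 0 = E0 u := by
  simp [Eu, Finsupp.single_apply]
lemma Eu_apply1 (u : Fin 6 →₀ ℕ) : Eu u 1 = E1 u := by
  simp [Eu, Finsupp.single_apply]
lemma Eu_apply2 (u : Fin 6 →₀ ℕ) : Eu u 2 = E2 u := by
  simp [Eu, Finsupp.single_apply]

lemma Eu_add (u v : Fin 6 →₀ ℕ) : Eu (u + v) = Eu u + Eu v := by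
  simp only [Eu, E0_add, E1_add, E2_add, Finsupp.single_add]; abel

lemma Eu_single0 : Eu (single (0 : Fin 6) 1) = single 1 3 := by
  simp [Eu, E0, E1, E2, Finsupp.single_apply]
lemma Eu_single1 : Eu (single (1 : Fin 6) 1) = single 0 2 + single 2 1 := by
  simp [Eu, E0, E1, E2, Finsupp.single_apply]
lemma Eu_single2 : Eu (single (2 : Fin 6) 1) = single 0 1 + single 1 2 := by
  simp [Eu, E0, E1, E2, Finsupp.single_apply, add_comm]
lemma Eu_single3 : Eu (single (3 : Fin 6) 1) = single 1 2 + single 2 1 := by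
  simp [Eu, E0, E1, E2, Finsupp.single_apply]
lemma Eu_single4 : Eu (single (4 : Fin 6) 1) = single 1 1 + single 2 2 := by
  simp [Eu, E0, E1, E2, Finsupp.single_apply]
lemma Eu_single5 : Eu (single (5 : Fin 6) 1) = single 0 1 + single 1 1 + single 2 1 := by
  simp [Eu, E0, E1, E2, Finsupp.single_apply]

lemma coeff_top : ∀ (n : ℕ) (u : Fin 6 →₀ ℕ), su u ≤ n → ∀ (c : k),
    coeff (Eu u) ((phi' k) (monomial u c)) = (-1) ^ (u 1) * c := by
  intro n
  induction n with
  | zero =>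
    intro u hu c
    have h0 : u = 0 := by
      ext j
      have : su u = 0 := Nat.le_zero.mp hu
      simp only [su] at this
      fin_cases j <;> simp <;> omega
    subst h0
    rw [monomial_zero', aeval_C]
    have hEu : Eu 0 = 0 := by simp [Eu, E0, E1, E2]
    rw [hEu, show (algebraMap k (MvPolynomial (Fin 3) k)) c = C c from rfl]
    simp
  | succ n ih =>
    intro u hu c
    by_cases h0 : u = 0
    · subst h0
      rw [monomial_zero', aeval_C]
      have hEu : Eu 0 = 0 := by simp [Eu, E0, E1, E2]
      rw [hEu, show (algebraMap k (MvPolynomial (Fin 3) k)) c = C c from rfl]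
      simp
    · obtain ⟨i, hi⟩ : ∃ i, u i ≠ 0 := by
        by_contra hall; push_neg at hall
        exact h0 (Finsupp.ext fun j => hall j)
      obtain ⟨hmul, h2⟩ := mono_decomp u i hi c
      rw [hmul, map_mul]
      set u' := u - single i 1 with hu'
      have hsu : su u' + 1 = su u := by
        conv_rhs => rw [← h2]
        rw [su_add, su_single]
      have hsu' : su u' ≤ n := by omega
      have hcase : i = 0 ∨ i = 1 ∨ i = 2 ∨ i = 3 ∨ i = 4 ∨ i = 5 := by
        fin_cases i <;> decide
      have hEuu : Eu u = Eu u' + Eu (single i 1) := by rw [← h2, Eu_add]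
      have hu1 : u 1 = u' 1 + (single i 1) 1 := by
        rw [← h2]; simp [Finsupp.add_apply]
      rcases hcase with rfl | rfl | rfl | rfl | rfl | rfl
      · rw [phi_X0, coeff_mul_monomial', hEuu, Eu_single0, add_tsub_cancel_right,
          if_pos le_add_self, mul_one, ih u' hsu' c, hu1]
        simp [Finsupp.single_apply]
      · rw [phi_X1, mul_sub, coeff_sub]
        have hM1 : coeff (Eu u) (phi' k (monomial u' c) * monomial (single 2 3) 1) = 0 := by
          rw [coeff_mul_monomial']
          split_ifs with hle
          · rw [mul_one]
            by_contra hnz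
            obtain ⟨f1, f2, f3⟩ := coeff_facts (su u') u' le_rfl c _ hnz
            rw [hEuu, Eu_single1] at f3
            simp only [Finsupp.tsub_apply, Finsupp.add_apply, Finsupp.single_apply] at f3
            simp only [Eu_apply0] at f3
            simp at f3
          · rfl
        rw [hM1, hEuu, Eu_single1, coeff_mul_monomial', add_tsub_cancel_right,
          if_pos le_add_self, mul_one, ih u' hsu' c, hu1]
        simp [Finsupp.single_apply, pow_succ]
      · rw [phi_X2, coeff_mul_monomial', hEuu, Eu_single2, add_tsub_cancel_right,
          if_pos le_add_self, mul_one, ih u' hsu' c, hu1]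
        simp [Finsupp.single_apply]
      · rw [phi_X3, coeff_mul_monomial', hEuu, Eu_single3, add_tsub_cancel_right,
          if_pos le_add_self, mul_one, ih u' hsu' c, hu1]
        simp [Finsupp.single_apply]
      · rw [phi_X4, coeff_mul_monomial', hEuu, Eu_single4, add_tsub_cancel_right,
          if_pos le_add_self, mul_one, ih u' hsu' c, hu1]
        simp [Finsupp.single_apply]
      · rw [phi_X5, coeff_mul_monomial', hEuu, Eu_single5, add_tsub_cancel_right,
          if_pos le_add_self, mul_one, ih u' hsu' c, hu1]
        simp [Finsupp.single_apply]

def Std (u : Fin 6 →₀ ℕ) : Prop :=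
  (u 2 = 0 ∨ u 4 = 0) ∧ u 3 ≤ 1 ∧ (u 2 = 0 ∨ u 3 = 0) ∧ (u 1 = 0 ∨ u 3 = 0) ∧
    (u 0 = 0 ∨ u 1 = 0)

set_option maxHeartbeats 4000000 in
lemma E_inj {u v : Fin 6 →₀ ℕ} (hu : Std u) (hv : Std v)
    (h0 : E0 u = E0 v) (h1 : E1 u = E1 v) (h2 : E2 u = E2 v) : u = v := by
  obtain ⟨s1, s2, s3, s4, s5⟩ := hu
  obtain ⟨t1, t2, t3, t4, t5⟩ := hv
  simp only [E0, E1, E2] at h0 h1 h2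
  have key : u 0 = v 0 ∧ u 1 = v 1 ∧ u 2 = v 2 ∧ u 3 = v 3 ∧ u 4 = v 4 ∧ u 5 = v 5 := by
    omega
  ext j
  have hj : j = 0 ∨ j = 1 ∨ j = 2 ∨ j = 3 ∨ j = 4 ∨ j = 5 := by fin_cases j <;> decide
  rcases hj with rfl | rfl | rfl | rfl | rfl | rfl <;> omega

lemma phi_inj_std (r : MvPolynomial (Fin 6) k) (hstd : ∀ m ∈ r.support, Std m)
    (hker : phi' k r = 0) : r = 0 := by
  by_contra hr
  have hne : r.support.Nonempty := Finset.nonempty_iff_ne_empty.mpr (mt MvPolynomial.support_eq_empty.mp hr)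
  obtain ⟨m₀, hm₀, hmax⟩ := r.support.exists_max_image E0 hne
  have hc : coeff (Eu m₀) (phi' k r) = (-1) ^ (m₀ 1) * coeff m₀ r := by
    conv_lhs => rw [← support_sum_monomial_coeff r]
    rw [map_sum, coeff_sum]
    rw [Finset.sum_eq_single m₀]
    · exact coeff_top (su m₀) m₀ le_rfl _
    · intro b hb hbne
      by_contra hnz
      obtain ⟨f1, f2, f3⟩ := coeff_facts (su b) b le_rfl _ _ hnz
      rw [Eu_apply0] at f3
      rw [Eu_apply1] at f1
      rw [Eu_apply0, Eu_apply2] at f2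
      have hble := hmax b hb
      exact hbne (E_inj (hstd b hb) (hstd m₀ hm₀) (by omega) (by omega) (by omega))
    · intro hnot; exact absurd hm₀ hnot
  rw [hker, coeff_zero] at hc
  have : coeff m₀ r = 0 := by
    rcases mul_eq_zero.mp hc.symm with h | h
    · exact absurd h (pow_ne_zero _ (neg_ne_zero.mpr one_ne_zero))
    · exact h
  exact (MvPolynomial.mem_support_iff.mp hm₀) this

def wdeg (u : Fin 6 →₀ ℕ) : ℕ := u 0 + 11 * u 1 + 5 * u 2 + 4 * u 3 + 6 * u 4 + 2 * u 5

lemma wdeg_add (u v : Fin 6 →₀ ℕ) : wdeg (u + v) = wdeg u + wdeg v := by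
  simp only [wdeg, Finsupp.add_apply]; ring

noncomputable def J (k : Type*) [Field k] : Ideal (MvPolynomial (Fin 6) k) :=
  Ideal.span {X 2 * X 4 - X 3 * X 5,
        X 3 ^ 2 - X 0 * X 4,
        X 2 * X 3 - X 0 * X 5,
        X 1 * X 3 - X 4 ^ 2 + X 5 ^ 2,
        X 0 * X 1 - X 3 * X 4 + X 2 * X 5}

lemma X_mul_X (i j : Fin 6) :
    (X i * X j : MvPolynomial (Fin 6) k) = monomial (single i 1 + single j 1) 1 := by
  rw [X, X, monomial_mul, mul_one]

lemma X_sq (i : Fin 6) : (X i ^ 2 : MvPolynomial (Fin 6) k) = monomial (single i 2) 1 :=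
  X_pow_eq_monomial

lemma fin6_cases (a : Fin 6) : a = 0 ∨ a = 1 ∨ a = 2 ∨ a = 3 ∨ a = 4 ∨ a = 5 := by
  fin_cases a <;> decide

lemma reduce_mono : ∀ (n : ℕ) (u : Fin 6 →₀ ℕ), wdeg u ≤ n →
    ∃ r : MvPolynomial (Fin 6) k, (∀ m ∈ r.support, Std m) ∧ monomial u (1:k) - r ∈ J k := by
  intro n
  induction n with
  | zero =>
    intro u hu
    refine ⟨monomial u 1, fun m hm => ?_, by simp [Ideal.zero_mem]⟩
    have hm' : m = u := by
      exact Finset.mem_singleton.mp (support_monomial_subset hm)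
    subst hm'
    have h0 : wdeg m = 0 := Nat.le_zero.mp hu
    simp only [wdeg] at h0
    constructor
    · omega
    constructor
    · omega
    refine ⟨by omega, by omega, by omega⟩
  | succ n ih =>
    intro u hu
    by_cases hstd : Std u
    · refine ⟨monomial u 1, fun m hm => ?_, by simp [Ideal.zero_mem]⟩
      have hm' : m = u := by
        exact Finset.mem_singleton.mp (support_monomial_subset hm)
      subst hm'; exact hstd
    · have hcase : (1 ≤ u 2 ∧ 1 ≤ u 4) ∨ (2 ≤ u 3) ∨ (1 ≤ u 2 ∧ 1 ≤ u 3) ∨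
          (1 ≤ u 1 ∧ 1 ≤ u 3) ∨ (1 ≤ u 0 ∧ 1 ≤ u 1) := by
        simp only [Std] at hstd
        omega
      clear hstd
      rcases hcase with ⟨hA, hB⟩ | hAB | ⟨hA, hB⟩ | ⟨hA, hB⟩ | ⟨hA, hB⟩
      · -- ce -> df
        have hle : single (2:Fin 6) 1 + single 4 1 ≤ u := by
          rw [Finsupp.le_def]
          intro a
          rcases fin6_cases a with rfl|rfl|rfl|rfl|rfl|rfl <;>
            simp [Finsupp.add_apply, Finsupp.single_apply] <;> omega
        set v := u - (single 2 1 + single 4 1) with hv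
        have hvs : v + (single 2 1 + single 4 1) = u := tsub_add_cancel_of_le hle
        have hid : monomial u (1:k) - monomial v 1 * (X 2 * X 4 - X 3 * X 5)
            = monomial (v + (single 3 1 + single 5 1)) 1 := by
          rw [mul_sub, X_mul_X, X_mul_X, monomial_mul, monomial_mul, mul_one, hvs]
          exact sub_sub_cancel _ _
        have hw : wdeg (v + (single 3 1 + single 5 1)) ≤ n := by
          have h1 := congrArg wdeg hvs
          rw [wdeg_add] at h1
          rw [wdeg_add]
          simp only [wdeg, Finsupp.add_apply, Finsupp.single_apply] at h1 hu ⊢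
          simp at h1 ⊢
          omega
        obtain ⟨r, hr1, hr2⟩ := ih _ hw
        refine ⟨r, hr1, ?_⟩
        have hsplit : monomial u (1:k) - r
            = monomial v 1 * (X 2 * X 4 - X 3 * X 5)
              + (monomial (v + (single 3 1 + single 5 1)) 1 - r) := by
          rw [← hid]; ring
        rw [hsplit]
        exact Ideal.add_mem _ (Ideal.mul_mem_left _ _
          (Ideal.subset_span (Set.mem_insert _ _))) hr2
      · -- d^2 -> ae
        have hle : single (3:Fin 6) 2 ≤ u := by
          rw [Finsupp.le_def]
          intro a
          rcases fin6_cases a with rfl|rfl|rfl|rfl|rfl|rfl <;>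
            simp [Finsupp.single_apply] <;> omega
        set v := u - single 3 2 with hv
        have hvs : v + single 3 2 = u := tsub_add_cancel_of_le hle
        have hid : monomial u (1:k) - monomial v 1 * (X 3 ^ 2 - X 0 * X 4)
            = monomial (v + (single 0 1 + single 4 1)) 1 := by
          rw [mul_sub, X_sq, X_mul_X, monomial_mul, monomial_mul]
          simp only [mul_one, one_mul]
          rw [hvs]
          exact sub_sub_cancel _ _
        have hw : wdeg (v + (single 0 1 + single 4 1)) ≤ n := by
          have h1 := congrArg wdeg hvs
          rw [wdeg_add] at h1
          rw [wdeg_add]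
          simp only [wdeg, Finsupp.add_apply, Finsupp.single_apply] at h1 hu ⊢
          simp at h1 ⊢
          omega
        obtain ⟨r, hr1, hr2⟩ := ih _ hw
        refine ⟨r, hr1, ?_⟩
        have hsplit : monomial u (1:k) - r
            = monomial v 1 * (X 3 ^ 2 - X 0 * X 4)
              + (monomial (v + (single 0 1 + single 4 1)) 1 - r) := by
          rw [← hid]; ring
        rw [hsplit]
        refine Ideal.add_mem _ (Ideal.mul_mem_left _ _ (Ideal.subset_span ?_)) hr2
        right; exact Set.mem_insert _ _
      · -- cd -> af
        have hle : single (2:Fin 6) 1 + single 3 1 ≤ u := by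
          rw [Finsupp.le_def]
          intro a
          rcases fin6_cases a with rfl|rfl|rfl|rfl|rfl|rfl <;>
            simp [Finsupp.add_apply, Finsupp.single_apply] <;> omega
        set v := u - (single 2 1 + single 3 1) with hv
        have hvs : v + (single 2 1 + single 3 1) = u := tsub_add_cancel_of_le hle
        have hid : monomial u (1:k) - monomial v 1 * (X 2 * X 3 - X 0 * X 5)
            = monomial (v + (single 0 1 + single 5 1)) 1 := by
          rw [mul_sub, X_mul_X, X_mul_X, monomial_mul, monomial_mul, mul_one, hvs]
          exact sub_sub_cancel _ _
        have hw : wdeg (v + (single 0 1 + single 5 1)) ≤ n := by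
          have h1 := congrArg wdeg hvs
          rw [wdeg_add] at h1
          rw [wdeg_add]
          simp only [wdeg, Finsupp.add_apply, Finsupp.single_apply] at h1 hu ⊢
          simp at h1 ⊢
          omega
        obtain ⟨r, hr1, hr2⟩ := ih _ hw
        refine ⟨r, hr1, ?_⟩
        have hsplit : monomial u (1:k) - r
            = monomial v 1 * (X 2 * X 3 - X 0 * X 5)
              + (monomial (v + (single 0 1 + single 5 1)) 1 - r) := by
          rw [← hid]; ring
        rw [hsplit]
        refine Ideal.add_mem _ (Ideal.mul_mem_left _ _ (Ideal.subset_span ?_)) hr2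
        right; right; exact Set.mem_insert _ _
      · -- bd -> e^2 - f^2
        have hle : single (1:Fin 6) 1 + single 3 1 ≤ u := by
          rw [Finsupp.le_def]
          intro a
          rcases fin6_cases a with rfl|rfl|rfl|rfl|rfl|rfl <;>
            simp [Finsupp.add_apply, Finsupp.single_apply] <;> omega
        set v := u - (single 1 1 + single 3 1) with hv
        have hvs : v + (single 1 1 + single 3 1) = u := tsub_add_cancel_of_le hle
        have hid : monomial u (1:k) - monomial v 1 * (X 1 * X 3 - X 4 ^ 2 + X 5 ^ 2)
            = monomial (v + single 4 2) 1 - monomial (v + single 5 2) 1 := by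
          rw [mul_add, mul_sub, X_mul_X, X_sq, X_sq, monomial_mul, monomial_mul,
            monomial_mul]
          simp only [mul_one, one_mul]
          rw [hvs]
          ring
        have hw1 : wdeg (v + single 4 2) ≤ n := by
          have h1 := congrArg wdeg hvs
          rw [wdeg_add] at h1
          rw [wdeg_add]
          simp only [wdeg, Finsupp.add_apply, Finsupp.single_apply] at h1 hu ⊢
          simp at h1 ⊢
          omega
        have hw2 : wdeg (v + single 5 2) ≤ n := by
          have h1 := congrArg wdeg hvs
          rw [wdeg_add] at h1
          rw [wdeg_add]
          simp only [wdeg, Finsupp.add_apply, Finsupp.single_apply] at h1 hu ⊢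
          simp at h1 ⊢
          omega
        obtain ⟨r1, hr11, hr12⟩ := ih _ hw1
        obtain ⟨r2, hr21, hr22⟩ := ih _ hw2
        refine ⟨r1 - r2, fun m hm => ?_, ?_⟩
        · rcases Finset.mem_union.mp (support_sub _ _ _ hm) with h | h
          · exact hr11 m h
          · exact hr21 m h
        · have hsplit : monomial u (1:k) - (r1 - r2)
              = monomial v 1 * (X 1 * X 3 - X 4 ^ 2 + X 5 ^ 2)
                + ((monomial (v + single 4 2) 1 - r1) - (monomial (v + single 5 2) 1 - r2)) := by
            have := hid
            linear_combination this
          rw [hsplit]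
          refine Ideal.add_mem _ (Ideal.mul_mem_left _ _ (Ideal.subset_span ?_))
            (Ideal.sub_mem _ hr12 hr22)
          right; right; right; exact Set.mem_insert _ _
      · -- ab -> de - cf
        have hle : single (0:Fin 6) 1 + single 1 1 ≤ u := by
          rw [Finsupp.le_def]
          intro a
          rcases fin6_cases a with rfl|rfl|rfl|rfl|rfl|rfl <;>
            simp [Finsupp.add_apply, Finsupp.single_apply] <;> omega
        set v := u - (single 0 1 + single 1 1) with hv
        have hvs : v + (single 0 1 + single 1 1) = u := tsub_add_cancel_of_le hle
        have hid : monomial u (1:k) - monomial v 1 * (X 0 * X 1 - X 3 * X 4 + X 2 * X 5)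
            = monomial (v + (single 3 1 + single 4 1)) 1
              - monomial (v + (single 2 1 + single 5 1)) 1 := by
          rw [mul_add, mul_sub, X_mul_X, X_mul_X, X_mul_X, monomial_mul, monomial_mul,
            monomial_mul]
          simp only [mul_one, one_mul]
          rw [hvs]
          ring
        have hw1 : wdeg (v + (single 3 1 + single 4 1)) ≤ n := by
          have h1 := congrArg wdeg hvs
          rw [wdeg_add] at h1
          rw [wdeg_add]
          simp only [wdeg, Finsupp.add_apply, Finsupp.single_apply] at h1 hu ⊢
          simp at h1 ⊢
          omega
        have hw2 : wdeg (v + (single 2 1 + single 5 1)) ≤ n := by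
          have h1 := congrArg wdeg hvs
          rw [wdeg_add] at h1
          rw [wdeg_add]
          simp only [wdeg, Finsupp.add_apply, Finsupp.single_apply] at h1 hu ⊢
          simp at h1 ⊢
          omega
        obtain ⟨r1, hr11, hr12⟩ := ih _ hw1
        obtain ⟨r2, hr21, hr22⟩ := ih _ hw2
        refine ⟨r1 - r2, fun m hm => ?_, ?_⟩
        · rcases Finset.mem_union.mp (support_sub _ _ _ hm) with h | h
          · exact hr11 m h
          · exact hr21 m h
        · have hsplit : monomial u (1:k) - (r1 - r2)
              = monomial v 1 * (X 0 * X 1 - X 3 * X 4 + X 2 * X 5)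
                + ((monomial (v + (single 3 1 + single 4 1)) 1 - r1)
                  - (monomial (v + (single 2 1 + single 5 1)) 1 - r2)) := by
            linear_combination hid
          rw [hsplit]
          refine Ideal.add_mem _ (Ideal.mul_mem_left _ _ (Ideal.subset_span ?_))
            (Ideal.sub_mem _ hr12 hr22)
          right; right; right; right; exact rfl

lemma reduce_poly (p : MvPolynomial (Fin 6) k) :
    ∃ r : MvPolynomial (Fin 6) k, (∀ m ∈ r.support, Std m) ∧ p - r ∈ J k := by
  induction p using MvPolynomial.induction_on' with
  | monomial u c =>
    obtain ⟨r, h1, h2⟩ := reduce_mono (k := k) (wdeg u) u le_rfl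
    refine ⟨c • r, fun m hm => h1 m (MvPolynomial.support_smul hm), ?_⟩
    have heq : monomial u c - c • r = C c * (monomial u (1:k) - r) := by
      rw [mul_sub]
      rw [C_mul_monomial, mul_one, smul_eq_C_mul]
    rw [heq]
    exact Ideal.mul_mem_left _ _ h2
  | add p q hp hq =>
    obtain ⟨rp, hp1, hp2⟩ := hp
    obtain ⟨rq, hq1, hq2⟩ := hq
    refine ⟨rp + rq, fun m hm => ?_, ?_⟩
    · rcases Finset.mem_union.mp (MvPolynomial.support_add hm) with h | h
      · exact hp1 m h
      · exact hq1 m h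
    · have : p + q - (rp + rq) = (p - rp) + (q - rq) := by ring
      rw [this]
      exact Ideal.add_mem _ hp2 hq2

lemma J_le_ker : J k ≤ RingHom.ker (phi' k).toRingHom := by
  rw [J, Ideal.span_le]
  intro x hx
  simp only [Set.mem_insert_iff, Set.mem_singleton_iff] at hx
  rw [SetLike.mem_coe, RingHom.mem_ker]
  rcases hx with rfl | rfl | rfl | rfl | rfl <;>
  · simp only [AlgHom.toRingHom_eq_coe, RingHom.coe_coe, map_sub, map_add, map_mul, map_pow,
      phi', Stmt5.phi, aeval_X]
    simp only [show (![X 1 ^ 3, X 2 ^ 3 - X 0 ^ 2 * X 2, X 0 * X 1 ^ 2, X 1 ^ 2 * X 2, X 1 * X 2 ^ 2, X 0 * X 1 * X 2] : Fin 6 → MvPolynomial (Fin 3) k) 0 = X 1 ^ 3 from rfl,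
      show (![X 1 ^ 3, X 2 ^ 3 - X 0 ^ 2 * X 2, X 0 * X 1 ^ 2, X 1 ^ 2 * X 2, X 1 * X 2 ^ 2, X 0 * X 1 * X 2] : Fin 6 → MvPolynomial (Fin 3) k) 1 = X 2 ^ 3 - X 0 ^ 2 * X 2 from rfl,
      show (![X 1 ^ 3, X 2 ^ 3 - X 0 ^ 2 * X 2, X 0 * X 1 ^ 2, X 1 ^ 2 * X 2, X 1 * X 2 ^ 2, X 0 * X 1 * X 2] : Fin 6 → MvPolynomial (Fin 3) k) 2 = X 0 * X 1 ^ 2 from rfl,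
      show (![X 1 ^ 3, X 2 ^ 3 - X 0 ^ 2 * X 2, X 0 * X 1 ^ 2, X 1 ^ 2 * X 2, X 1 * X 2 ^ 2, X 0 * X 1 * X 2] : Fin 6 → MvPolynomial (Fin 3) k) 3 = X 1 ^ 2 * X 2 from rfl,
      show (![X 1 ^ 3, X 2 ^ 3 - X 0 ^ 2 * X 2, X 0 * X 1 ^ 2, X 1 ^ 2 * X 2, X 1 * X 2 ^ 2, X 0 * X 1 * X 2] : Fin 6 → MvPolynomial (Fin 3) k) 4 = X 1 * X 2 ^ 2 from rfl,
      show (![X 1 ^ 3, X 2 ^ 3 - X 0 ^ 2 * X 2, X 0 * X 1 ^ 2, X 1 ^ 2 * X 2, X 1 * X 2 ^ 2, X 0 * X 1 * X 2] : Fin 6 → MvPolynomial (Fin 3) k) 5 = X 0 * X 1 * X 2 from rfl]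
    ring

end Stmt5Proof

/-- Lemma 5.8 (Claim:onX), elimination computation: the kernel of `φ` is the ideal generated
by the five quadrics `ce − df`, `d² − ae`, `cd − af`, `bd − e² + f²`, `ab − de + cf`
(where `a,b,c,d,e,f` denote the six variables). -/
theorem stmt5 (k : Type*) [Field k] [CharZero k] :
    RingHom.ker (Stmt5.phi k).toRingHom =
      Ideal.span {X 2 * X 4 - X 3 * X 5,
        X 3 ^ 2 - X 0 * X 4,
        X 2 * X 3 - X 0 * X 5,
        X 1 * X 3 - X 4 ^ 2 + X 5 ^ 2,
        X 0 * X 1 - X 3 * X 4 + X 2 * X 5} := by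
  apply le_antisymm
  · intro p hp
    obtain ⟨r, hstd, hJ⟩ := Stmt5Proof.reduce_poly (k := k) p
    have h1 : Stmt5Proof.phi' k (p - r) = 0 := Stmt5Proof.J_le_ker hJ
    have h2 : Stmt5Proof.phi' k p = 0 := hp
    have h3 : Stmt5Proof.phi' k r = 0 := by
      have h4 := map_sub (Stmt5Proof.phi' k) p r
      rw [h1, h2] at h4
      exact (sub_eq_zero.mp h4.symm).symm ▸ rfl
    have h5 := Stmt5Proof.phi_inj_std r hstd h3
    rw [h5, sub_zero] at hJ
    exact hJ
  · exact Stmt5Proof.J_le_ker
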